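/- arXiv:2006.15410 — 3 statements merged into one kernel-verified Lean document; each statement's English description precedes it below -/
import Mathlib

section
/- Fix n ≥ 2, a measurement interval [t_s, t_e], and exponents α, β, γ ∈ (0, ∞). Let x_1 and x_2 be events whose occurrences are n distinct, equally spaced timestamps contained in [t_s, t_e]: x_j has occurrences a_j + i·L_j/(n-1) for i = 0, 1, ..., n-1, where L_j > 0 is the width of x_j's interval of occurrences. If L_1 < L_2, then P(x_1;[t_s,t_e]) < P(x_2;[t_s,t_e]). -/
/-!
An event is a finite, nondecreasing list `l` of occurrence timestamps (reals, repetitions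
allowed). `tF l` / `tL l` are the first / last occurrences, `l.dedup` lists the distinct
occurrences, `gapSeq l i` is the `i`-th gap between consecutive distinct occurrences,
`Wterm` is the width term, `Fterm` the frequency term, `gapEntropy` the (normalized-gap)
Shannon entropy, `Sterm` the spread term, and `Pers` the persistence measure
`W^α · F^β · S^γ`.
-/

noncomputable section

/-- First occurrence `t_f` of an event (a sorted list of timestamps). -/
def tF (l : List ℝ) : ℝ := l.headI

/-- Last occurrence `t_l` of an event. -/
def tL (l : List ℝ) : ℝ := l.getLastD 0

/-- The `i`-th gap `g i = u (i+1) - u i` between consecutive distinct occurrences. -/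
def gapSeq (l : List ℝ) (i : ℕ) : ℝ := l.dedup.getD (i + 1) 0 - l.dedup.getD i 0

/-- Width term `W(x;[t_s,t_e]) = (t_l - t_f + 1)/(t_e - t_s + 1)` (0 if no occurrences). -/
def Wterm (l : List ℝ) (ts te : ℝ) : ℝ :=
  if l.length = 0 then 0 else (tL l - tF l + 1) / (te - ts + 1)

/-- Frequency term `F(x;[t_s,t_e]) = log₁₀ (n + 1)`. -/
def Fterm (l : List ℝ) : ℝ := Real.logb 10 (l.length + 1)

/-- Gap entropy `H(Γ_x) = -∑ (g i/(t_l - t_f)) · log₂ (g i/(t_l - t_f))`. -/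
def gapEntropy (l : List ℝ) : ℝ :=
  -∑ i ∈ Finset.range (l.dedup.length - 1),
    (gapSeq l i / (tL l - tF l)) * Real.logb 2 (gapSeq l i / (tL l - tF l))

/-- Spread term `S(x;[t_s,t_e]) = H(Γ_x)/log₂(m-1) + 1` if there are `m - 1 > 1` gaps,
and `1` if `m - 1 ∈ {0, 1}`. -/
def Sterm (l : List ℝ) : ℝ :=
  if 1 < l.dedup.length - 1 then
    gapEntropy l / Real.logb 2 (l.dedup.length - 1) + 1
  else 1

/-- Persistence measure `P(x;[t_s,t_e]) = W^α · F^β · S^γ` (real exponents). -/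
def Pers (l : List ℝ) (ts te α β γ : ℝ) : ℝ :=
  Wterm l ts te ^ α * Fterm l ^ β * Sterm l ^ γ

end

/-- The event with `n` equally spaced occurrences `a + i · (L / (n - 1))`, `i = 0, …, n-1`,
covering an interval of occurrences of width `L`. -/
noncomputable def uniformEvent (a L : ℝ) (n : ℕ) : List ℝ :=
  (List.range n).map (fun i => a + (i : ℝ) * (L / ((n : ℝ) - 1)))

namespace UEAux


lemma headI_eq_getD (l : List ℝ) : l.headI = l.getD 0 0 := by cases l <;> rfl

lemma getLastD_eq_getD (l : List ℝ) : l.getLastD 0 = l.getD (l.length - 1) 0 := by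
  rw [List.getLastD_eq_getLast?, List.getLast?_eq_getElem?, List.getD_eq_getElem?_getD]

lemma uE_eq (a L : ℝ) (n : ℕ) :
    uniformEvent a L n = (List.range n).map (fun i : ℕ => a + (i:ℝ) * (L / ((n:ℝ)-1))) := by
  unfold uniformEvent
  simp only [bind_pure_comp, List.map_eq_map, List.map_map]
  rfl

lemma uE_length (a L : ℝ) (n : ℕ) : (uniformEvent a L n).length = n := by
  rw [uE_eq, List.length_map, List.length_range]

variable {a L : ℝ} {n : ℕ}

lemma cast_pos (hn : 2 ≤ n) : (0:ℝ) < (n:ℝ) - 1 := by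
  have : (2:ℝ) ≤ n := by exact_mod_cast hn
  linarith

lemma cast_sub_one (hn : 2 ≤ n) : ((n - 1 : ℕ) : ℝ) = (n:ℝ) - 1 := by
  have h : 1 ≤ n := by omega
  push_cast [h]
  ring

lemma uE_getD {i : ℕ} (hi : i < n) :
    (uniformEvent a L n).getD i 0 = a + (i:ℝ) * (L / ((n:ℝ)-1)) := by
  rw [uE_eq, List.getD_eq_getElem?_getD, List.getElem?_map, List.getElem?_range hi]
  rfl

lemma uE_dedup (hL : 0 < L) (hn : 2 ≤ n) :
    (uniformEvent a L n).dedup = uniformEvent a L n := by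
  refine List.dedup_eq_self.mpr ?_
  rw [uE_eq]
  refine List.nodup_range.map ?_
  intro i j h
  simp only at h
  have hn' := cast_pos (n := n) hn
  have hd : L / ((n:ℝ)-1) ≠ 0 := by positivity
  have h2 : (i:ℝ) * (L / ((n:ℝ)-1)) = (j:ℝ) * (L / ((n:ℝ)-1)) := by linarith
  have : (i:ℝ) = j := mul_right_cancel₀ hd h2
  exact_mod_cast this

lemma uE_tF (hn : 2 ≤ n) : tF (uniformEvent a L n) = a := by
  rw [tF, headI_eq_getD, uE_getD (by omega : 0 < n)]
  simp

lemma uE_tL (hn : 2 ≤ n) : tL (uniformEvent a L n) = a + L := by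
  rw [tL, getLastD_eq_getD, uE_length, uE_getD (by omega : n - 1 < n), cast_sub_one hn]
  have hn' := cast_pos (n := n) hn
  field_simp

lemma uE_width (hn : 2 ≤ n) : tL (uniformEvent a L n) - tF (uniformEvent a L n) = L := by
  rw [uE_tF hn, uE_tL hn]; ring

lemma uE_gapSeq (hL : 0 < L) (hn : 2 ≤ n) {i : ℕ} (hi : i < n - 1) :
    gapSeq (uniformEvent a L n) i = L / ((n:ℝ)-1) := by
  rw [gapSeq, uE_dedup hL hn, uE_getD (by omega : i + 1 < n), uE_getD (by omega : i < n)]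
  push_cast
  ring

lemma uE_gapEntropy (hL : 0 < L) (hn : 2 ≤ n) :
    gapEntropy (uniformEvent a L n) = Real.logb 2 ((n:ℝ) - 1) := by
  have hn' := cast_pos (n := n) hn
  rw [gapEntropy, uE_dedup hL hn, uE_length]
  have hterm : ∀ i ∈ Finset.range (n - 1),
      (gapSeq (uniformEvent a L n) i / (tL (uniformEvent a L n) - tF (uniformEvent a L n))) *
        Real.logb 2 (gapSeq (uniformEvent a L n) i /
          (tL (uniformEvent a L n) - tF (uniformEvent a L n)))
      = (((n:ℝ)-1)⁻¹) * Real.logb 2 (((n:ℝ)-1)⁻¹) := by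
    intro i hi
    rw [Finset.mem_range] at hi
    rw [uE_gapSeq hL hn hi, uE_width hn]
    have hq : L / ((n:ℝ)-1) / L = ((n:ℝ)-1)⁻¹ := by
      field_simp
    rw [hq]
  rw [Finset.sum_congr rfl hterm, Finset.sum_const, Finset.card_range, nsmul_eq_mul,
    cast_sub_one hn, Real.logb_inv]
  field_simp

lemma uE_Sterm (hL : 0 < L) (hn : 2 ≤ n) :
    Sterm (uniformEvent a L n) = if 2 < n then 2 else 1 := by
  rw [Sterm, uE_dedup hL hn, uE_length]
  by_cases h : 2 < n
  · rw [if_pos (by omega), if_pos h, uE_gapEntropy hL hn]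
    have hgt : (1:ℝ) < (n:ℝ) - 1 := by
      have : (3:ℝ) ≤ n := by exact_mod_cast h
      linarith
    have hlog : Real.logb 2 ((n:ℝ) - 1) ≠ 0 :=
      ne_of_gt (Real.logb_pos (by norm_num) hgt)
    rw [div_self hlog]
    norm_num
  · rw [if_neg (by omega), if_neg h]

lemma uE_Wterm (hn : 2 ≤ n) (ts te : ℝ) :
    Wterm (uniformEvent a L n) ts te = (L + 1) / (te - ts + 1) := by
  rw [Wterm, if_neg (by rw [uE_length]; omega), uE_tF hn, uE_tL hn]
  ring_nf

lemma uE_mem_a (hn : 2 ≤ n) : a ∈ uniformEvent a L n := by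
  rw [uE_eq]
  exact List.mem_map.mpr ⟨0, List.mem_range.mpr (by omega), by simp⟩

lemma uE_mem_aL (hn : 2 ≤ n) : a + L ∈ uniformEvent a L n := by
  rw [uE_eq]
  refine List.mem_map.mpr ⟨n - 1, List.mem_range.mpr (by omega), ?_⟩
  rw [cast_sub_one hn]
  have hn' := cast_pos (n := n) hn
  field_simp

end UEAux

open UEAux

/-- Property P1: among two events with `n ≥ 2` distinct, uniformly spaced occurrences in
`[t_s, t_e]`, persistence is strictly larger for the one whose occurrences are spread over
a wider interval (`L₁ < L₂`). -/
theorem persistence_P1_wider_interval (ts te a₁ a₂ L₁ L₂ : ℝ) (n : ℕ) (hn : 2 ≤ n)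
    (hL₁ : 0 < L₁) (hL₂ : 0 < L₂) (hL : L₁ < L₂)
    (hmem₁ : ∀ t ∈ uniformEvent a₁ L₁ n, ts ≤ t ∧ t ≤ te)
    (hmem₂ : ∀ t ∈ uniformEvent a₂ L₂ n, ts ≤ t ∧ t ≤ te)
    (α β γ : ℝ) (hα : 0 < α) (hβ : 0 < β) (hγ : 0 < γ) :
    Pers (uniformEvent a₁ L₁ n) ts te α β γ < Pers (uniformEvent a₂ L₂ n) ts te α β γ := by
  have h1 := (hmem₁ a₁ (uE_mem_a hn)).1
  have h2 := (hmem₁ (a₁ + L₁) (uE_mem_aL hn)).2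
  have hDpos : (0:ℝ) < te - ts + 1 := by linarith
  have hW1 : Wterm (uniformEvent a₁ L₁ n) ts te = (L₁ + 1) / (te - ts + 1) := uE_Wterm hn ts te
  have hW2 : Wterm (uniformEvent a₂ L₂ n) ts te = (L₂ + 1) / (te - ts + 1) := uE_Wterm hn ts te
  have hW1pos : 0 < Wterm (uniformEvent a₁ L₁ n) ts te := by rw [hW1]; positivity
  have hWlt : Wterm (uniformEvent a₁ L₁ n) ts te < Wterm (uniformEvent a₂ L₂ n) ts te := by
    rw [hW1, hW2]
    gcongr
  have hF : Fterm (uniformEvent a₁ L₁ n) = Fterm (uniformEvent a₂ L₂ n) := by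
    rw [Fterm, Fterm, uE_length, uE_length]
  have hFpos : 0 < Fterm (uniformEvent a₁ L₁ n) := by
    rw [Fterm, uE_length]
    apply Real.logb_pos (by norm_num)
    have : (2:ℝ) ≤ n := by exact_mod_cast hn
    linarith
  have hS : Sterm (uniformEvent a₁ L₁ n) = Sterm (uniformEvent a₂ L₂ n) := by
    rw [uE_Sterm hL₁ hn, uE_Sterm hL₂ hn]
  have hSpos : 0 < Sterm (uniformEvent a₁ L₁ n) := by
    rw [uE_Sterm hL₁ hn]
    split <;> norm_num
  rw [Pers, Pers, ← hF, ← hS]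
  have hWrpow : Wterm (uniformEvent a₁ L₁ n) ts te ^ α < Wterm (uniformEvent a₂ L₂ n) ts te ^ α :=
    Real.rpow_lt_rpow (le_of_lt hW1pos) hWlt hα
  have hFr : 0 < Fterm (uniformEvent a₁ L₁ n) ^ β := Real.rpow_pos_of_pos hFpos β
  have hSr : 0 < Sterm (uniformEvent a₁ L₁ n) ^ γ := Real.rpow_pos_of_pos hSpos γ
  exact mul_lt_mul_of_pos_right (mul_lt_mul_of_pos_right hWrpow hFr) hSr
end

section
/- Fix real numbers t_f < t_l and a measurement interval [t_s, t_e] with t_s ≤ t_f and t_l ≤ t_e, and exponents α, β, γ ∈ (0, ∞). For n ≥ 2 and k ≥ 1, let x̃^n be the event with n distinct occurrences equally spaced over [t_f, t_l] (i.e., at timestamps t_f + i·(t_l - t_f)/(n-1) for i = 0, ..., n-1), and similarly let x̃^{n+k} have n + k distinct occurrences equally spaced over the same interval [t_f, t_l]. Then P(x̃^n;[t_s,t_e]) < P(x̃^{n+k};[t_s,t_e]). -/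
lemma uE_eq (a L : ℝ) (n : ℕ) :
    uniformEvent a L n = (List.range n).map (fun i : ℕ => a + (i:ℝ) * (L/((n:ℝ)-1))) := by
  show List.map _ ((List.range n).flatMap fun i => [((i:ℕ):ℝ)]) = _
  rw [← List.map_eq_flatMap, List.map_map]
  rfl

section helpers

variable (a L : ℝ) (n : ℕ)

lemma uE_length : (uniformEvent a L n).length = n := by
  rw [uE_eq, List.length_map, List.length_range]

lemma uE_nodup (hL : 0 < L) (hn : 2 ≤ n) : (uniformEvent a L n).Nodup := by
  have hs : 0 < L / ((n : ℝ) - 1) := by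
    apply div_pos hL
    have : (2:ℝ) ≤ (n:ℝ) := by exact_mod_cast hn
    linarith
  rw [uE_eq]
  apply List.Nodup.map _ (List.nodup_range (n := n))
  intro i j h
  have h2 : (i:ℝ) * (L / ((n : ℝ) - 1)) = (j:ℝ) * (L / ((n : ℝ) - 1)) := by linarith
  have h3 : (i:ℝ) = (j:ℝ) := mul_right_cancel₀ (ne_of_gt hs) h2
  exact_mod_cast h3

lemma uE_dedup (hL : 0 < L) (hn : 2 ≤ n) :
    (uniformEvent a L n).dedup = uniformEvent a L n :=
  List.Nodup.dedup (uE_nodup a L n hL hn)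

lemma uE_getD (i : ℕ) (hi : i < n) :
    (uniformEvent a L n).getD i 0 = a + (i : ℝ) * (L / ((n : ℝ) - 1)) := by
  rw [uE_eq]
  have hlen : i < ((List.range n).map (fun i : ℕ => a + (i:ℝ) * (L/((n:ℝ)-1)))).length := by
    rw [List.length_map, List.length_range]; exact hi
  rw [List.getD_eq_getElem _ _ hlen]
  simp only [List.getElem_map, List.getElem_range]

lemma uE_tF (hn : 2 ≤ n) : tF (uniformEvent a L n) = a := by
  obtain ⟨m, rfl⟩ : ∃ m, n = m + 1 := ⟨n - 1, by omega⟩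
  rw [tF, uniformEvent, List.range_succ_eq_map]
  simp

lemma uE_tL (hn : 2 ≤ n) : tL (uniformEvent a L n) = a + L := by
  have hne : uniformEvent a L n ≠ [] := by
    intro h
    have := uE_length a L n
    rw [h] at this
    simp at this
    omega
  have hlt : (uniformEvent a L n).length - 1 < (uniformEvent a L n).length := by
    rw [uE_length]; omega
  rw [tL, List.getLastD_eq_getLast? , List.getLast?_eq_getLast hne, Option.getD_some,
    List.getLast_eq_getElem, ← List.getD_eq_getElem _ 0 hlt, uE_length,
    uE_getD a L n _ (by omega)]
  have h1 : ((n - 1 : ℕ) : ℝ) = (n:ℝ) - 1 := by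
    have : (1:ℕ) ≤ n := by omega
    push_cast [this]
    ring
  rw [h1]
  have hne1 : (n:ℝ) - 1 ≠ 0 := by
    have : (2:ℝ) ≤ (n:ℝ) := by exact_mod_cast hn
    linarith
  field_simp

lemma uE_gapSeq (hL : 0 < L) (hn : 2 ≤ n) (i : ℕ) (hi : i < n - 1) :
    gapSeq (uniformEvent a L n) i = L / ((n : ℝ) - 1) := by
  rw [gapSeq, uE_dedup a L n hL hn, uE_getD a L n i (by omega),
    uE_getD a L n (i+1) (by omega)]
  push_cast
  ring

lemma uE_gapEntropy (hL : 0 < L) (hn : 2 ≤ n) :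
    gapEntropy (uniformEvent a L n) = Real.logb 2 ((n:ℝ) - 1) := by
  have hn1 : (0:ℝ) < (n:ℝ) - 1 := by
    have : (2:ℝ) ≤ (n:ℝ) := by exact_mod_cast hn
    linarith
  rw [gapEntropy, uE_dedup a L n hL hn, uE_length, uE_tL a L n hn, uE_tF a L n hn]
  have hTL : a + L - a = L := by ring
  rw [hTL]
  have hterm : ∀ i ∈ Finset.range (n - 1),
      (gapSeq (uniformEvent a L n) i / L) * Real.logb 2 (gapSeq (uniformEvent a L n) i / L)
      = ((n:ℝ)-1)⁻¹ * Real.logb 2 (((n:ℝ)-1)⁻¹) := by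
    intro i hi
    rw [uE_gapSeq a L n hL hn i (Finset.mem_range.mp hi)]
    have : L / ((n:ℝ) - 1) / L = ((n:ℝ)-1)⁻¹ := by
      rw [div_div, mul_comm, ← div_div, div_self (ne_of_gt hL), one_div]
    rw [this]
  rw [Finset.sum_congr rfl hterm, Finset.sum_const, Finset.card_range, nsmul_eq_mul]
  have hcast : ((n - 1 : ℕ) : ℝ) = (n:ℝ) - 1 := by
    have : (1:ℕ) ≤ n := by omega
    push_cast [this]; ring
  rw [hcast, Real.logb, Real.log_inv]
  field_simp [Real.logb]
  ring_nf
  rw [Real.logb, mul_div_assoc', mul_div_cancel_left₀ _ (Real.log_pos (by norm_num : (1:ℝ) < 2)).ne']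

lemma uE_Sterm_le (hL : 0 < L) (hn : 2 ≤ n) : Sterm (uniformEvent a L n) ≤ 2 := by
  rw [Sterm, uE_dedup a L n hL hn, uE_length]
  split_ifs with h
  · rw [uE_gapEntropy a L n hL hn]
    have hne : Real.logb 2 ((n:ℝ) - 1) ≠ 0 := by
      apply ne_of_gt
      apply Real.logb_pos (by norm_num)
      have : (3:ℝ) ≤ (n:ℝ) := by exact_mod_cast (by omega : 3 ≤ n)
      linarith
    rw [div_self hne]
    norm_num
  · norm_num

lemma uE_Sterm_eq (hL : 0 < L) (hn : 3 ≤ n) : Sterm (uniformEvent a L n) = 2 := by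
  rw [Sterm, uE_dedup a L n hL (by omega), uE_length, if_pos (by omega),
    uE_gapEntropy a L n hL (by omega)]
  have hne : Real.logb 2 ((n:ℝ) - 1) ≠ 0 := by
    apply ne_of_gt
    apply Real.logb_pos (by norm_num)
    have : (3:ℝ) ≤ (n:ℝ) := by exact_mod_cast hn
    linarith
  rw [div_self hne]
  norm_num

end helpers


lemma uE_Fterm (a L : ℝ) (n : ℕ) : Fterm (uniformEvent a L n) = Real.logb 10 ((n:ℝ) + 1) := by
  rw [Fterm, uE_length]

lemma uE_Wterm (a L ts te : ℝ) (n : ℕ) (hn : 2 ≤ n) :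
    Wterm (uniformEvent a L n) ts te = (L + 1) / (te - ts + 1) := by
  rw [Wterm, uE_length, if_neg (by omega), uE_tL a L n hn, uE_tF a L n hn]
  ring_nf

lemma uE_Sterm_ge (a L : ℝ) (n : ℕ) (hL : 0 < L) (hn : 2 ≤ n) :
    1 ≤ Sterm (uniformEvent a L n) := by
  rw [Sterm, uE_dedup a L n hL hn, uE_length]
  split_ifs with h
  · rw [uE_gapEntropy a L n hL hn]
    have hne : Real.logb 2 ((n:ℝ) - 1) ≠ 0 := by
      apply ne_of_gt
      apply Real.logb_pos (by norm_num)
      have : (3:ℝ) ≤ (n:ℝ) := by exact_mod_cast (by omega : 3 ≤ n)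
      linarith
    rw [div_self hne]
    norm_num
  · exact le_refl 1

/-- Property P2: among events with unique, uniformly spaced occurrences over the same
interval of occurrences `[t_f, t_l]`, persistence is strictly larger for the one with more
occurrences. -/
theorem persistence_P2_more_occurrences (ts te tf tl : ℝ)
    (htf : tf < tl) (hstf : ts ≤ tf) (htle : tl ≤ te)
    (n k : ℕ) (hn : 2 ≤ n) (hk : 1 ≤ k)
    (α β γ : ℝ) (hα : 0 < α) (hβ : 0 < β) (hγ : 0 < γ) :
    Pers (uniformEvent tf (tl - tf) n) ts te α β γ
      < Pers (uniformEvent tf (tl - tf) (n + k)) ts te α β γ := by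
  have hL : 0 < tl - tf := by linarith
  have hnk : 2 ≤ n + k := by omega
  have hW : Wterm (uniformEvent tf (tl - tf) n) ts te
      = Wterm (uniformEvent tf (tl - tf) (n + k)) ts te := by
    rw [uE_Wterm _ _ _ _ _ hn, uE_Wterm _ _ _ _ _ hnk]
  have hWpos : 0 < Wterm (uniformEvent tf (tl - tf) n) ts te := by
    rw [uE_Wterm _ _ _ _ _ hn]
    apply div_pos (by linarith) (by linarith)
  have hFpos : 0 < Fterm (uniformEvent tf (tl - tf) n) := by
    rw [uE_Fterm]
    apply Real.logb_pos (by norm_num)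
    have : (2:ℝ) ≤ (n:ℝ) := by exact_mod_cast hn
    linarith
  have hFlt : Fterm (uniformEvent tf (tl - tf) n)
      < Fterm (uniformEvent tf (tl - tf) (n + k)) := by
    rw [uE_Fterm, uE_Fterm]
    apply Real.logb_lt_logb (by norm_num)
    · have : (0:ℝ) < (n:ℝ) := by positivity
      linarith
    · have : (n:ℝ) < ((n + k : ℕ) : ℝ) := by exact_mod_cast (by omega : n < n + k)
      linarith
  have hS1 : 1 ≤ Sterm (uniformEvent tf (tl - tf) n) := uE_Sterm_ge _ _ _ hL hn
  have hSle : Sterm (uniformEvent tf (tl - tf) n)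
      ≤ Sterm (uniformEvent tf (tl - tf) (n + k)) := by
    calc Sterm (uniformEvent tf (tl - tf) n) ≤ 2 := uE_Sterm_le _ _ _ hL hn
    _ = Sterm (uniformEvent tf (tl - tf) (n + k)) :=
      (uE_Sterm_eq _ _ _ hL (by omega)).symm
  rw [Pers, Pers, ← hW, mul_assoc, mul_assoc]
  apply mul_lt_mul_of_pos_left _ (Real.rpow_pos_of_pos hWpos α)
  apply mul_lt_mul
  · exact Real.rpow_lt_rpow hFpos.le hFlt hβ
  · exact Real.rpow_le_rpow (by linarith) hSle hγ.le
  · exact Real.rpow_pos_of_pos (by linarith) γ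
  · exact (Real.rpow_pos_of_pos (by linarith) β).le
end

section
/- Fix a measurement interval [t_s, t_e], exponents α, β, γ ∈ (0, ∞), and n > 2. Let x be an event with n distinct occurrences (all timestamps distinct) contained in [t_s, t_e], with first occurrence t_f and last occurrence t_l (t_f < t_l), and let x̃^n be the event with n distinct occurrences equally spaced over [t_f, t_l] (at timestamps t_f + i·(t_l - t_f)/(n-1) for i = 0, ..., n-1). Then P(x;[t_s,t_e]) ≤ P(x̃^n;[t_s,t_e]), with equality if and only if all the gaps of x are equal (i.e., x's occurrences are themselves equally spaced). -/
/- ### Auxiliary lemmas -/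

lemma flatMap_cast (l : List ℕ) : (l.flatMap fun a => [(a:ℝ)]) = l.map (fun a : ℕ => (a:ℝ)) := by
  induction l with
  | nil => rfl
  | cons h t ih => simp_all [List.flatMap_cons]

lemma uniformEvent_eq (a L : ℝ) (n : ℕ) :
    uniformEvent a L n = (List.range n).map (fun i : ℕ => a + (i : ℝ) * (L / ((n : ℝ) - 1))) := by
  unfold uniformEvent
  simp
  rw [← List.map_eq_flatMap, List.map_map]
  rfl


lemma headI_eq_getD (l : List ℝ) : l.headI = l.getD 0 0 := by
  cases l with
  | nil => rfl
  | cons a t => rfl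

lemma getLastD_eq_getD (l : List ℝ) : l.getLastD 0 = l.getD (l.length - 1) 0 := by
  rw [List.getLastD_eq_getLast?, List.getLast?_eq_getElem?, List.getD_eq_getElem?_getD]

open Finset in
lemma entropy_aux (m : ℕ) (hm : 2 ≤ m) (p : ℕ → ℝ)
    (hp : ∀ i ∈ Finset.range m, 0 < p i)
    (hsum : ∑ i ∈ Finset.range m, p i = 1) :
    (-∑ i ∈ Finset.range m, p i * Real.log (p i) ≤ Real.log m) ∧
    ((-∑ i ∈ Finset.range m, p i * Real.log (p i)) = Real.log m ↔
      ∀ i ∈ Finset.range m, p i = 1 / m) := by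
  have hm0 : (0:ℝ) < m := by exact_mod_cast Nat.lt_of_lt_of_le two_pos hm
  have hmne : (m:ℝ) ≠ 0 := ne_of_gt hm0
  -- termwise bound
  have hle : ∀ i ∈ Finset.range m, p i * Real.log (1 / m / p i) ≤ 1 / m - p i := by
    intro i hi
    have hpi := hp i hi
    have ht : 0 < 1 / (m:ℝ) / p i := by positivity
    have h1 := Real.log_le_sub_one_of_pos ht
    have h2 : p i * (1 / (m:ℝ) / p i - 1) = 1 / m - p i := by field_simp
    nlinarith [mul_le_mul_of_nonneg_left h1 hpi.le]
  have heqiff : ∀ i ∈ Finset.range m,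
      (p i * Real.log (1 / m / p i) = 1 / m - p i ↔ p i = 1 / m) := by
    intro i hi
    have hpi := hp i hi
    have ht : 0 < 1 / (m:ℝ) / p i := by positivity
    have h2 : p i * (1 / (m:ℝ) / p i - 1) = 1 / m - p i := by field_simp
    constructor
    · intro he
      by_contra hne
      have htne : 1 / (m:ℝ) / p i ≠ 1 := by
        intro h1
        apply hne
        field_simp at h1
        field_simp
        linear_combination -h1
      have := Real.log_lt_sub_one_of_pos ht htne
      nlinarith [mul_lt_mul_of_pos_left this hpi]
    · intro he
      rw [he]
      have : (1:ℝ) / m / (1 / m) = 1 := by field_simp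
      rw [this]
      simp
  -- sum of RHS is zero
  have hsumrhs : ∑ i ∈ Finset.range m, (1 / (m:ℝ) - p i) = 0 := by
    rw [Finset.sum_sub_distrib, hsum, Finset.sum_const, Finset.card_range]
    rw [nsmul_eq_mul]; field_simp
    norm_num
  -- rewrite LHS sum
  have hrw : ∑ i ∈ Finset.range m, p i * Real.log (1 / m / p i)
      = -Real.log m - ∑ i ∈ Finset.range m, p i * Real.log (p i) := by
    have : ∀ i ∈ Finset.range m, p i * Real.log (1 / m / p i)
        = -Real.log m * p i - p i * Real.log (p i) := by
      intro i hi
      have hpi := hp i hi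
      rw [Real.log_div (by positivity) hpi.ne', Real.log_div one_ne_zero hmne, Real.log_one]
      ring
    rw [Finset.sum_congr rfl this, Finset.sum_sub_distrib, ← Finset.mul_sum, hsum]
    ring
  have hsumle : ∑ i ∈ Finset.range m, p i * Real.log (1 / m / p i)
      ≤ ∑ i ∈ Finset.range m, (1 / (m:ℝ) - p i) := Finset.sum_le_sum hle
  constructor
  · rw [hrw, hsumrhs] at hsumle; linarith
  · constructor
    · intro he
      have hz : ∑ i ∈ Finset.range m, p i * Real.log (1 / m / p i)
          = ∑ i ∈ Finset.range m, (1 / (m:ℝ) - p i) := by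
        rw [hrw, hsumrhs]; linarith
      intro i hi
      exact (heqiff i hi).mp (((Finset.sum_eq_sum_iff_of_le hle).mp hz) i hi)
    · intro hu
      have : ∀ i ∈ Finset.range m, p i * Real.log (p i) = (1/m) * Real.log (1/m) := by
        intro i hi; rw [hu i hi]
      rw [Finset.sum_congr rfl this, Finset.sum_const, Finset.card_range, nsmul_eq_mul]
      rw [Real.log_div one_ne_zero hmne, Real.log_one]
      field_simp
      ring

/-- Property P3: among events with `n > 2` distinct occurrences, first occurrence `t_f`,
and last occurrence `t_l`, persistence is maximized by the event with uniformly spaced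
occurrences, with equality iff all the gaps are equal. -/
theorem persistence_P3_uniform_spacing_maximal (ts te : ℝ) (n : ℕ) (hn : 2 < n)
    (l : List ℝ) (hsorted : l.Pairwise (· < ·)) (hlen : l.length = n)
    (hmem : ∀ t ∈ l, ts ≤ t ∧ t ≤ te) (htfl : tF l < tL l)
    (α β γ : ℝ) (hα : 0 < α) (hβ : 0 < β) (hγ : 0 < γ) :
    Pers l ts te α β γ ≤ Pers (uniformEvent (tF l) (tL l - tF l) n) ts te α β γ ∧
    (Pers l ts te α β γ = Pers (uniformEvent (tF l) (tL l - tF l) n) ts te α β γ ↔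
      ∀ i ∈ Finset.range (n - 1), ∀ j ∈ Finset.range (n - 1), gapSeq l i = gapSeq l j) := by
  set a := tF l with ha
  set L := tL l - tF l with hLdef
  have hL : 0 < L := by rw [hLdef]; linarith
  have hn1R : (0:ℝ) < (n:ℝ) - 1 := by
    have : (2:ℝ) < n := by exact_mod_cast hn
    linarith
  set d := L / ((n:ℝ) - 1) with hd
  have hdpos : 0 < d := by positivity
  set u := uniformEvent a L n with hu
  have hu' : u = (List.range n).map (fun i : ℕ => a + (i : ℝ) * d) := uniformEvent_eq a L n
  -- basic facts about u
  have hulen : u.length = n := by rw [hu', List.length_map, List.length_range]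
  have hugetD : ∀ i, i < n → u.getD i 0 = a + (i:ℝ) * d := by
    intro i hi
    rw [hu', List.getD_eq_getElem?_getD, List.getElem?_map, List.getElem?_range hi]
    rfl
  have husorted : u.Pairwise (· < ·) := by
    rw [hu']
    apply List.Pairwise.map
    · intro x y hxy
      have : (x:ℝ) < y := by exact_mod_cast hxy
      nlinarith
    · exact List.pairwise_lt_range
  have hund : u.Nodup := husorted.nodup
  have hudedup : u.dedup = u := List.dedup_eq_self.mpr hund
  have hutF : tF u = a := by
    rw [tF, headI_eq_getD, hugetD 0 (by omega)]
    simp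
  have hcast : ((n - 1 : ℕ) : ℝ) = (n:ℝ) - 1 := by
    have h1 : 1 ≤ n := by omega
    push_cast [Nat.cast_sub h1]
    ring
  have hutL : tL u = a + L := by
    rw [tL, getLastD_eq_getD, hulen, hugetD (n-1) (by omega), hcast, hd]
    field_simp
  have hugap : ∀ i, i < n - 1 → gapSeq u i = d := by
    intro i hi
    rw [gapSeq, hudedup, hugetD (i+1) (by omega), hugetD i (by omega)]
    push_cast
    ring
  -- basic facts about l
  have hlnd : l.Nodup := hsorted.nodup
  have hldedup : l.dedup = l := List.dedup_eq_self.mpr hlnd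
  have hltF : tF l = l.getD 0 0 := headI_eq_getD l
  have hltL : tL l = l.getD (n-1) 0 := by rw [tL, getLastD_eq_getD, hlen]
  have hlmono : ∀ i j, i < j → j < n → l.getD i 0 < l.getD j 0 := by
    intro i j hij hj
    have hi' : i < l.length := by omega
    have hj' : j < l.length := by omega
    rw [List.getD_eq_getElem l 0 hi', List.getD_eq_getElem l 0 hj']
    have := List.pairwise_iff_get.mp hsorted ⟨i, hi'⟩ ⟨j, hj'⟩ hij
    simpa using this
  have hlgap : ∀ i, i < n - 1 → 0 < gapSeq l i := by
    intro i hi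
    rw [gapSeq, hldedup]
    have := hlmono i (i+1) (by omega) (by omega)
    linarith
  have hgapsum : ∑ i ∈ Finset.range (n-1), gapSeq l i = L := by
    have hc : ∀ i ∈ Finset.range (n-1), gapSeq l i = l.getD (i+1) 0 - l.getD i 0 := by
      intro i hi; rw [gapSeq, hldedup]
    rw [Finset.sum_congr rfl hc, Finset.sum_range_sub (fun i => l.getD i 0)]
    rw [hLdef, hltF, hltL]
  -- W and F terms agree
  have hW : Wterm u ts te = Wterm l ts te := by
    rw [Wterm, Wterm, hulen, hlen, hutF, hutL, ha, hLdef]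
    ring_nf
  have hF : Fterm u = Fterm l := by rw [Fterm, Fterm, hulen, hlen]
  -- positivity of W and F
  have htFmem : tF l ∈ l := by
    rw [hltF, List.getD_eq_getElem l 0 (by omega)]
    exact List.getElem_mem _
  have htLmem : tL l ∈ l := by
    rw [hltL, List.getD_eq_getElem l 0 (by omega)]
    exact List.getElem_mem _
  have hWpos : 0 < Wterm l ts te := by
    rw [Wterm, if_neg (by rw [hlen]; omega)]
    have h1 := (hmem _ htFmem).1
    have h2 := (hmem _ htLmem).2
    apply div_pos <;> [skip; skip] <;> linarith
  have hFpos : 0 < Fterm l := by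
    rw [Fterm]
    apply Real.logb_pos (by norm_num)
    rw [hlen]
    have : (2:ℝ) < n := by exact_mod_cast hn
    linarith
  -- normalized gaps of l
  set p : ℕ → ℝ := fun i => gapSeq l i / L with hp
  have hppos : ∀ i ∈ Finset.range (n-1), 0 < p i := by
    intro i hi
    rw [Finset.mem_range] at hi
    exact div_pos (hlgap i hi) hL
  have hpsum : ∑ i ∈ Finset.range (n-1), p i = 1 := by
    rw [hp, ← Finset.sum_div, hgapsum, div_self hL.ne']
  have hm2 : 2 ≤ n - 1 := by omega
  have hent := entropy_aux (n-1) hm2 p hppos hpsum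
  have hlog2 : (0:ℝ) < Real.log 2 := Real.log_pos (by norm_num)
  have hlogbpos : 0 < Real.logb 2 ((n:ℝ) - 1) := by
    apply Real.logb_pos (by norm_num)
    have : (2:ℝ) < n := by exact_mod_cast hn
    linarith
  -- express gapEntropy l via p
  have hHl : gapEntropy l
      = (-∑ i ∈ Finset.range (n-1), p i * Real.log (p i)) / Real.log 2 := by
    have hterm : ∀ i ∈ Finset.range (n-1),
        gapSeq l i / (tL l - tF l) * Real.logb 2 (gapSeq l i / (tL l - tF l))
          = p i * Real.log (p i) / Real.log 2 := by
      intro i hi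
      rw [Real.logb, ← hLdef, hp]
      ring
    rw [gapEntropy, hldedup, hlen, Finset.sum_congr rfl hterm, ← Finset.sum_div, neg_div]
  have hHle : gapEntropy l ≤ Real.logb 2 ((n:ℝ) - 1) := by
    rw [hHl, Real.logb, ← hcast]
    exact div_le_div_of_nonneg_right hent.1 hlog2.le
  have hHiff : gapEntropy l = Real.logb 2 ((n:ℝ) - 1) ↔
      ∀ i ∈ Finset.range (n-1), p i = 1 / ((n:ℝ) - 1) := by
    rw [hHl, Real.logb, ← hcast]
    rw [div_left_inj' hlog2.ne']
    rw [hent.2]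
  -- gap entropy of u
  have hHu : gapEntropy u = Real.logb 2 ((n:ℝ) - 1) := by
    rw [gapEntropy, hudedup, hulen]
    have hdL : d / (tL u - tF u) = 1 / ((n:ℝ) - 1) := by
      rw [hutF, hutL, hd]
      field_simp
      rw [add_sub_cancel_left, div_self hL.ne']
    have hc : ∀ i ∈ Finset.range (n-1),
        (gapSeq u i / (tL u - tF u)) * Real.logb 2 (gapSeq u i / (tL u - tF u))
          = (1 / ((n:ℝ)-1)) * Real.logb 2 (1 / ((n:ℝ)-1)) := by
      intro i hi
      rw [Finset.mem_range] at hi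
      rw [hugap i hi, hdL]
    rw [Finset.sum_congr rfl hc, Finset.sum_const, Finset.card_range, nsmul_eq_mul, hcast]
    rw [one_div, Real.logb_inv]
    field_simp
  -- spread terms
  have hSlen_u : 1 < u.dedup.length - 1 := by rw [hudedup, hulen]; omega
  have hSlen_l : 1 < l.dedup.length - 1 := by rw [hldedup, hlen]; omega
  have hSu : Sterm u = 2 := by
    rw [Sterm, if_pos hSlen_u, hHu, hudedup, hulen, div_self hlogbpos.ne']
    norm_num
  have hSl : Sterm l = gapEntropy l / Real.logb 2 ((n:ℝ) - 1) + 1 := by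
    rw [Sterm, if_pos hSlen_l, hldedup, hlen]
  -- gapEntropy l is nonnegative
  have hpone : ∀ i ∈ Finset.range (n-1), p i ≤ 1 := by
    intro i hi
    calc p i ≤ ∑ j ∈ Finset.range (n-1), p j :=
          Finset.single_le_sum (fun j hj => (hppos j hj).le) hi
      _ = 1 := hpsum
  have hHnonneg : 0 ≤ gapEntropy l := by
    rw [hHl]
    apply div_nonneg _ hlog2.le
    rw [neg_nonneg]
    apply Finset.sum_nonpos
    intro i hi
    have h1 := hppos i hi
    have h2 := hpone i hi
    have h3 : Real.log (p i) ≤ 0 := Real.log_nonpos h1.le h2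
    nlinarith
  have hSl1 : 1 ≤ Sterm l := by
    rw [hSl]
    have : 0 ≤ gapEntropy l / Real.logb 2 ((n:ℝ) - 1) := div_nonneg hHnonneg hlogbpos.le
    linarith
  have hSle : Sterm l ≤ Sterm u := by
    rw [hSl, hSu]
    have : gapEntropy l / Real.logb 2 ((n:ℝ) - 1) ≤ 1 :=
      (div_le_one hlogbpos).mpr hHle
    linarith
  have hSiff : Sterm l = Sterm u ↔
      ∀ i ∈ Finset.range (n-1), p i = 1 / ((n:ℝ) - 1) := by
    rw [hSl, hSu, ← hHiff]
    constructor
    · intro h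
      have h' : gapEntropy l / Real.logb 2 ((n:ℝ) - 1) = 1 := by linarith
      exact (div_eq_one_iff_eq hlogbpos.ne').mp h'
    · intro h
      rw [h, div_self hlogbpos.ne']
      norm_num
  -- uniform gaps iff all gaps equal
  have hgapiff : (∀ i ∈ Finset.range (n-1), p i = 1 / ((n:ℝ) - 1)) ↔
      (∀ i ∈ Finset.range (n - 1), ∀ j ∈ Finset.range (n - 1), gapSeq l i = gapSeq l j) := by
    constructor
    · intro h i hi j hj
      have hi' := h i hi
      have hj' := h j hj
      simp only [hp] at hi' hj'
      have e1 : gapSeq l i = L / ((n:ℝ)-1) := by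
        rw [div_eq_div_iff hL.ne' hn1R.ne'] at hi'
        rw [eq_div_iff hn1R.ne']
        linarith
      have e2 : gapSeq l j = L / ((n:ℝ)-1) := by
        rw [div_eq_div_iff hL.ne' hn1R.ne'] at hj'
        rw [eq_div_iff hn1R.ne']
        linarith
      rw [e1, e2]
    · intro h i hi
      have hsum' : ∑ j ∈ Finset.range (n-1), gapSeq l j = L := hgapsum
      have hconst : ∀ j ∈ Finset.range (n-1), gapSeq l j = gapSeq l i := by
        intro j hj; exact h j hj i hi
      rw [Finset.sum_congr rfl hconst, Finset.sum_const, Finset.card_range,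
        nsmul_eq_mul, hcast] at hsum'
      simp only [hp]
      rw [div_eq_div_iff hL.ne' hn1R.ne']
      linarith
  -- persistence comparison
  have hSnn : (0:ℝ) ≤ Sterm l := by linarith
  have hCpos : 0 < Wterm l ts te ^ α * Fterm l ^ β :=
    mul_pos (Real.rpow_pos_of_pos hWpos α) (Real.rpow_pos_of_pos hFpos β)
  have hPl : Pers l ts te α β γ
      = (Wterm l ts te ^ α * Fterm l ^ β) * Sterm l ^ γ := rfl
  have hPu : Pers u ts te α β γ
      = (Wterm l ts te ^ α * Fterm l ^ β) * Sterm u ^ γ := by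
    rw [Pers, hW, hF]
  have hrple : Sterm l ^ γ ≤ Sterm u ^ γ := Real.rpow_le_rpow hSnn hSle hγ.le
  constructor
  · rw [hPl, hPu]
    exact mul_le_mul_of_nonneg_left hrple hCpos.le
  · rw [hPl, hPu, ← hgapiff, ← hSiff]
    constructor
    · intro h
      have h2 : Sterm l ^ γ = Sterm u ^ γ := mul_left_cancel₀ hCpos.ne' h
      by_contra hne
      have hlt : Sterm l < Sterm u := lt_of_le_of_ne hSle hne
      have := Real.rpow_lt_rpow hSnn hlt hγ
      linarith
    · intro h
      rw [h]
end
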